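/- For real a, x with 0 < x < a, setting λ = x/a, the lower regularized incomplete gamma function satisfies P(a,x) = ((λ e^{1-λ})^a / √(2πa)) · (1/(1-λ) + O(1/((1-λ)³ a))), where the O-bound is uniform over all 0 < x < a. -/

import Mathlib

open MeasureTheory Set

section AuxTemme

open Real Filter Nat


lemma stirl_ge (n : ℕ) : Real.sqrt Real.pi ≤ Stirling.stirlingSeq (n + 1) := by
  have h := Stirling.tendsto_stirlingSeq_sqrt_pi
  have h2 : Filter.Tendsto (fun m => Stirling.stirlingSeq (m + 1)) atTop (nhds (Real.sqrt Real.pi)) :=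
    h.comp (tendsto_add_atTop_nat 1)
  exact Stirling.stirlingSeq'_antitone.le_of_tendsto h2 n

lemma stirl_log_ge (n : ℕ) : Real.log (Real.sqrt Real.pi) ≤ Real.log (Stirling.stirlingSeq (n + 1)) :=
  Real.log_le_log (Real.sqrt_pos.mpr Real.pi_pos) (stirl_ge n)

-- telescoping upper bound: for p m, log s(p+2) - log s(p+2+m) ≤ 1/(4(p+1)) - 1/(4(p+1+m))
lemma stirl_tele (p : ℕ) : ∀ m : ℕ, Real.log (Stirling.stirlingSeq (p + 2)) -
    Real.log (Stirling.stirlingSeq (p + 2 + m)) ≤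
    1 / (4 * ((p : ℝ) + 1)) - 1 / (4 * ((p : ℝ) + 1 + m)) := by
  intro m
  induction m with
  | zero => simp
  | succ m ih =>
    have step := Stirling.log_stirlingSeq_sub_log_stirlingSeq_succ (p + 1 + m + 1)
    have key : (1:ℝ) / (4 * (↑(p + 1 + m + 1) : ℝ) ^ 2) ≤
        1 / (4 * ((p : ℝ) + 1 + m)) - 1 / (4 * ((p : ℝ) + 1 + m + 1)) := by
      push_cast
      rw [div_sub_div _ _ (by positivity) (by positivity)]
      rw [div_le_div_iff₀ (by positivity) (by positivity)]
      push_cast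
      ring_nf
      nlinarith [sq_nonneg ((p:ℝ) + m), Nat.cast_nonneg (α := ℝ) p, Nat.cast_nonneg (α := ℝ) m]
    have e1 : p + 2 + (m + 1) = (p + 1 + m) + 2 := by ring
    have e2 : p + 2 + m = (p + 1 + m) + 1 := by ring
    rw [e1]
    have split : Real.log (Stirling.stirlingSeq (p + 2)) - Real.log (Stirling.stirlingSeq ((p+1+m) + 2))
        = (Real.log (Stirling.stirlingSeq (p + 2)) - Real.log (Stirling.stirlingSeq (p + 2 + m)))
          + (Real.log (Stirling.stirlingSeq ((p+1+m)+1)) - Real.log (Stirling.stirlingSeq ((p+1+m) + 2))) := by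
      rw [e2]; ring
    rw [split]
    push_cast at key step ih ⊢
    ring_nf at key step ih ⊢
    linarith

lemma stirl_le (p : ℕ) : Real.log (Stirling.stirlingSeq (p + 2)) - Real.log (Real.sqrt Real.pi)
    ≤ 1 / (4 * ((p : ℝ) + 1)) := by
  have hcont : ContinuousAt Real.log (Real.sqrt Real.pi) :=
    Real.continuousAt_log (ne_of_gt (Real.sqrt_pos.mpr Real.pi_pos))
  have h1 : Filter.Tendsto (fun m : ℕ => Stirling.stirlingSeq (p + 2 + m)) atTop
      (nhds (Real.sqrt Real.pi)) := by
    have := Stirling.tendsto_stirlingSeq_sqrt_pi.comp (tendsto_add_atTop_nat (p + 2))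
    refine this.congr (fun m => by simp [Nat.add_comm])
  have h2 : Filter.Tendsto (fun m : ℕ => Real.log (Stirling.stirlingSeq (p + 2)) -
      Real.log (Stirling.stirlingSeq (p + 2 + m))) atTop
      (nhds (Real.log (Stirling.stirlingSeq (p + 2)) - Real.log (Real.sqrt Real.pi))) :=
    tendsto_const_nhds.sub (hcont.tendsto.comp h1)
  refine le_of_tendsto h2 (Filter.Eventually.of_forall fun m => ?_)
  refine (stirl_tele p m).trans ?_
  have : 0 ≤ 1 / (4 * ((p : ℝ) + 1 + m)) := by positivity
  linarith

-- |log n! - ((n+1/2) log n - n + log √(2π))| ≤ 1/(4(n-1)), for n ≥ 2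
lemma log_factorial_stirling (n : ℕ) (hn : 2 ≤ n) :
    0 ≤ Real.log (n !) - (((n : ℝ) + 1/2) * Real.log n - n + Real.log (Real.sqrt (2 * Real.pi)))
    ∧ Real.log (n !) - (((n : ℝ) + 1/2) * Real.log n - n + Real.log (Real.sqrt (2 * Real.pi)))
      ≤ 1 / (4 * ((n : ℝ) - 1)) := by
  obtain ⟨p, rfl⟩ : ∃ p, n = p + 2 := ⟨n - 2, by omega⟩
  have hform := Stirling.log_stirlingSeq_formula (p + 2)
  have hnpos : (0:ℝ) < (p:ℝ) + 2 := by positivity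
  have hlog2n : Real.log (2 * ((p:ℝ) + 2)) = Real.log 2 + Real.log ((p:ℝ)+2) :=
    Real.log_mul (by norm_num) (ne_of_gt hnpos)
  have hlogdiv : Real.log (((p:ℝ)+2) / Real.exp 1) = Real.log ((p:ℝ)+2) - 1 := by
    rw [Real.log_div (ne_of_gt hnpos) (Real.exp_ne_zero 1), Real.log_exp]
  have hsqrt : Real.log (Real.sqrt (2 * Real.pi)) =
      1/2 * Real.log 2 + Real.log (Real.sqrt Real.pi) := by
    rw [Real.log_sqrt (by positivity), Real.log_mul (by norm_num) (ne_of_gt Real.pi_pos),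
      Real.log_sqrt Real.pi_pos.le]
    ring
  have key : Real.log ((p+2) !) - ((((p:ℝ)+2) + 1/2) * Real.log ((p:ℝ)+2) - ((p:ℝ)+2)
      + Real.log (Real.sqrt (2 * Real.pi)))
      = Real.log (Stirling.stirlingSeq (p + 2)) - Real.log (Real.sqrt Real.pi) := by
    have : Real.log (Stirling.stirlingSeq (p+2)) = Real.log ((p+2) !)
        - 1 / 2 * Real.log (2 * ((p:ℝ)+2)) - ((p:ℝ)+2) * Real.log (((p:ℝ)+2) / Real.exp 1) := by
      rw [hform]; push_cast; ring_nf
    rw [this, hlog2n, hlogdiv, hsqrt]; ring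
  constructor
  · push_cast at key ⊢
    have h0 := stirl_log_ge (p + 1)
    have : p + 1 + 1 = p + 2 := rfl
    rw [this] at h0
    linarith
  · push_cast at key ⊢
    have h1 := stirl_le p
    have : (4 : ℝ) * ((p:ℝ) + 2 - 1) = 4 * ((p:ℝ)+1) := by ring
    rw [this]
    linarith

noncomputable def stirl (y : ℝ) : ℝ :=
  (y - 1/2) * Real.log y - y + Real.log (Real.sqrt (2 * Real.pi))

lemma gamma_int_stirling (n : ℕ) (hn : 2 ≤ n) :
    |Real.log (Real.Gamma ((n:ℝ) + 1)) - stirl ((n:ℝ) + 1)| ≤ 1 / ((n:ℝ) - 1) := by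
  have hn2 : (2:ℝ) ≤ (n:ℝ) := by exact_mod_cast hn
  have hu : (0:ℝ) < (n:ℝ) := by linarith
  have hfact := log_factorial_stirling n hn
  rw [Real.Gamma_nat_eq_factorial]
  have hlogratio : Real.log ((n:ℝ)+1) - Real.log (n:ℝ) = Real.log (((n:ℝ)+1)/(n:ℝ)) :=
    (Real.log_div (by positivity) (by positivity)).symm
  have hup : Real.log (((n:ℝ)+1)/(n:ℝ)) ≤ 1/(n:ℝ) := by
    have := Real.log_le_sub_one_of_pos (x := ((n:ℝ)+1)/(n:ℝ)) (by positivity)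
    have h2 : ((n:ℝ)+1)/(n:ℝ) - 1 = 1/(n:ℝ) := by field_simp; ring
    linarith
  have hlo : 1/((n:ℝ)+1) ≤ Real.log (((n:ℝ)+1)/(n:ℝ)) := by
    have := Real.log_le_sub_one_of_pos (x := (n:ℝ)/((n:ℝ)+1)) (by positivity)
    have h2 : Real.log ((n:ℝ)/((n:ℝ)+1)) = - Real.log (((n:ℝ)+1)/(n:ℝ)) := by
      rw [← Real.log_inv]; congr 1; field_simp
    have h3 : (n:ℝ)/((n:ℝ)+1) - 1 = -(1/((n:ℝ)+1)) := by field_simp; ring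
    rw [h2, h3] at this
    linarith
  -- difference = r - g
  have key : Real.log (n.factorial) - stirl ((n:ℝ)+1)
      = (Real.log (n.factorial) - (((n:ℝ) + 1/2) * Real.log n - n + Real.log (Real.sqrt (2*Real.pi))))
        - (((n:ℝ) + 1/2) * Real.log (((n:ℝ)+1)/(n:ℝ)) - 1) := by
    unfold stirl
    rw [← hlogratio]
    ring
  rw [abs_le]
  constructor
  · rw [key]
    have hg : ((n:ℝ) + 1/2) * Real.log (((n:ℝ)+1)/(n:ℝ)) - 1 ≤ 1/(2*(n:ℝ)) := by
      have := mul_le_mul_of_nonneg_left hup (by positivity : (0:ℝ) ≤ (n:ℝ) + 1/2)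
      have h2 : ((n:ℝ)+1/2) * (1/(n:ℝ)) = 1 + 1/(2*(n:ℝ)) := by field_simp
      linarith
    have h3 : 1/(2*(n:ℝ)) ≤ 1/((n:ℝ)-1) := by
      rw [div_le_div_iff₀ (by linarith) (by linarith)]; linarith
    linarith [hfact.1]
  · rw [key]
    have hg : -(1/(2*((n:ℝ)+1))) ≤ ((n:ℝ) + 1/2) * Real.log (((n:ℝ)+1)/(n:ℝ)) - 1 := by
      have := mul_le_mul_of_nonneg_left hlo (by positivity : (0:ℝ) ≤ (n:ℝ) + 1/2)
      have h2 : ((n:ℝ)+1/2) * (1/((n:ℝ)+1)) = 1 - 1/(2*((n:ℝ)+1)) := by field_simp; ring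
      linarith
    have h4 : 1/(4*((n:ℝ)-1)) + 1/(2*((n:ℝ)+1)) ≤ 1/((n:ℝ)-1) := by
      have h5 : 1/(2*((n:ℝ)+1)) ≤ 1/(2*((n:ℝ)-1)) := by
        rw [div_le_div_iff₀ (by linarith) (by linarith)]; linarith
      have h6 : 1/(4*((n:ℝ)-1)) + 1/(2*((n:ℝ)-1)) ≤ 1/((n:ℝ)-1) := by
        rw [div_add_div _ _ (by linarith) (by linarith), div_le_div_iff₀ (by nlinarith) (by linarith)]
        nlinarith
      linarith
    linarith [hfact.2]

lemma stirl_hasDeriv {y : ℝ} (hy : 0 < y) :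
    HasDerivAt stirl (Real.log y - 1/(2*y)) y := by
  have h1 : HasDerivAt (fun z : ℝ => (z - 1/2) * Real.log z)
      (1 * Real.log y + (y - 1/2) * y⁻¹) y :=
    (((hasDerivAt_id y).sub_const (1/2))).mul (Real.hasDerivAt_log (ne_of_gt hy))
  have hval : Real.log y - 1/(2*y) = 1 * Real.log y + (y - 1/2) * y⁻¹ - 1 := by
    field_simp; ring
  rw [hval]
  exact (h1.sub (hasDerivAt_id y)).add_const _

lemma stirl_cont {b c : ℝ} (hb : 0 < b) : ContinuousOn stirl (Icc b c) := by
  intro z hz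
  exact ((stirl_hasDeriv (lt_of_lt_of_le hb hz.1)).continuousAt).continuousWithinAt

lemma stirl_slope {b c : ℝ} (hb : 0 < b) (hbc : b < c) :
    (c - b) * (Real.log b - 1/(2*b)) ≤ stirl c - stirl b ∧
    stirl c - stirl b ≤ (c - b) * (Real.log c - 1/(2*c)) := by
  obtain ⟨d, hd, hsl⟩ := exists_hasDerivAt_eq_slope stirl (fun y => Real.log y - 1/(2*y)) hbc
    (stirl_cont hb) (fun z hz => stirl_hasDeriv (lt_trans hb hz.1))
  obtain ⟨hd1, hd2⟩ := hd
  have hdb : 0 < d := lt_trans hb hd1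
  have hcb : 0 < c - b := by linarith
  have hmono1 : Real.log b - 1/(2*b) ≤ Real.log d - 1/(2*d) := by
    have := Real.log_le_log hb hd1.le
    have h2 : 1/(2*d) ≤ 1/(2*b) := by
      rw [div_le_div_iff₀ (by linarith) (by linarith)]; linarith
    linarith
  have hmono2 : Real.log d - 1/(2*d) ≤ Real.log c - 1/(2*c) := by
    have := Real.log_le_log hdb hd2.le
    have h2 : 1/(2*c) ≤ 1/(2*d) := by
      rw [div_le_div_iff₀ (by linarith) (by linarith)]; linarith
    linarith
  have heq : stirl c - stirl b = (c - b) * (Real.log d - 1/(2*d)) := by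
    rw [hsl] at *
    field_simp
  constructor
  · rw [heq]; exact mul_le_mul_of_nonneg_left hmono1 hcb.le
  · rw [heq]; exact mul_le_mul_of_nonneg_left hmono2 hcb.le

set_option maxHeartbeats 1000000 in
lemma gamma_real_stirling {a : ℝ} (ha : 16 ≤ a) :
    |Real.log (Real.Gamma a) - stirl a| ≤ 6 / a := by
  set n : ℕ := ⌊a⌋₊ with hn
  have hna : (n:ℝ) ≤ a := Nat.floor_le (by linarith)
  have han : a < (n:ℝ) + 1 := Nat.lt_floor_add_one a
  have hn16 : (16:ℕ) ≤ n := Nat.le_floor (by exact_mod_cast ha)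
  have hn16' : (16:ℝ) ≤ (n:ℝ) := by exact_mod_cast hn16
  have ha0 : (0:ℝ) < a := by linarith
  set t : ℝ := a - n with htdef
  clear_value t
  have ht0 : 0 ≤ t := by simp [htdef]; linarith
  have ht1 : t < 1 := by simp [htdef]; linarith
  -- integer stirling at n and n+1
  have hint1 : |Real.log (Real.Gamma ((n:ℝ))) - stirl ((n:ℝ))| ≤ 1 / ((n:ℝ) - 2) := by
    have h := gamma_int_stirling (n - 1) (by omega)
    have hc : ((n - 1 : ℕ) : ℝ) = (n:ℝ) - 1 := by
      have : (1:ℕ) ≤ n := by omega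
      push_cast [Nat.cast_sub this]; ring
    rw [hc] at h
    have he : (n:ℝ) - 1 + 1 = (n:ℝ) := by ring
    rw [he] at h
    have he2 : (n:ℝ) - 1 - 1 = (n:ℝ) - 2 := by ring
    rw [he2] at h
    exact h
  have hint2 : |Real.log (Real.Gamma ((n:ℝ) + 1)) - stirl ((n:ℝ) + 1)| ≤ 1 / ((n:ℝ) - 1) :=
    gamma_int_stirling n (by omega)
  -- convexity of log Gamma
  have hconv := Real.convexOn_log_Gamma
  -- upper bound
  have hup : Real.log (Real.Gamma a) ≤ (1 - t) * Real.log (Real.Gamma (n:ℝ))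
      + t * Real.log (Real.Gamma ((n:ℝ) + 1)) := by
    have hmem1 : (n:ℝ) ∈ Ioi (0:ℝ) := by simp; linarith
    have hmem2 : (n:ℝ) + 1 ∈ Ioi (0:ℝ) := by simp; linarith
    have := hconv.2 hmem1 hmem2 (by linarith : (0:ℝ) ≤ 1 - t) ht0 (by ring)
    have harg : (1 - t) • ((n:ℝ)) + t • ((n:ℝ) + 1) = a := by
      simp [smul_eq_mul, htdef]; ring
    rw [harg] at this
    simp only [Function.comp_apply, smul_eq_mul] at this
    linarith
  -- lower bound via convexity at a, a+1
  have hlow : Real.log (Real.Gamma ((n:ℝ) + 1)) ≤ Real.log (Real.Gamma a) + (1 - t) * Real.log a := by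
    have hmem1 : a ∈ Ioi (0:ℝ) := by simp [ha0]
    have hmem2 : a + 1 ∈ Ioi (0:ℝ) := by simp; linarith
    have h2 := hconv.2 hmem1 hmem2 ht0 (by linarith : (0:ℝ) ≤ 1 - t) (by ring)
    have harg : t • a + (1 - t) • (a + 1) = (n:ℝ) + 1 := by
      simp [smul_eq_mul, htdef]; ring
    rw [harg] at h2
    simp only [Function.comp_apply, smul_eq_mul] at h2
    have hG : Real.log (Real.Gamma (a + 1)) = Real.log a + Real.log (Real.Gamma a) := by
      rw [Real.Gamma_add_one (ne_of_gt ha0), Real.log_mul (ne_of_gt ha0)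
        (ne_of_gt (Real.Gamma_pos_of_pos ha0))]
    rw [hG] at h2
    nlinarith [h2]
  -- stirl slopes
  have hs1 := stirl_slope (b := (n:ℝ)) (c := (n:ℝ)+1) (by linarith) (by linarith)
  have hlogn : Real.log (n:ℝ) ≤ Real.log ((n:ℝ)+1) := Real.log_le_log (by linarith) (by linarith)
  have hlogn1 : Real.log ((n:ℝ)+1) - Real.log (n:ℝ) ≤ 1/(n:ℝ) := by
    have h0 := Real.log_le_sub_one_of_pos (x := ((n:ℝ)+1)/(n:ℝ)) (by positivity)
    rw [Real.log_div (by positivity) (by positivity)] at h0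
    have h2 : ((n:ℝ)+1)/(n:ℝ) - 1 = 1/(n:ℝ) := by field_simp; ring
    linarith
  -- key upper estimate on interpolation gap
  have hgap : (1 - t) * stirl (n:ℝ) + t * stirl ((n:ℝ)+1) - stirl a ≤ 3/(2*(n:ℝ)) := by
    rcases eq_or_lt_of_le ht0 with h | h
    · have hta : a = (n:ℝ) := by rw [htdef] at h; linarith
      rw [hta, ← h]
      have hpos : (0:ℝ) < 3/(2*(n:ℝ)) := by positivity
      simp; linarith
    · have hs2 := stirl_slope (b := (n:ℝ)) (c := a) (by linarith) (by rw [htdef] at h; linarith)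
      -- (1-t) s(n) + t s(n+1) - s(a) = t (s(n+1) - s(n)) - (s(a) - s(n))
      have hid : (1 - t) * stirl (n:ℝ) + t * stirl ((n:ℝ)+1) - stirl a
          = t * (stirl ((n:ℝ)+1) - stirl (n:ℝ)) - (stirl a - stirl (n:ℝ)) := by ring
      rw [hid]
      have h1 : stirl ((n:ℝ)+1) - stirl (n:ℝ) ≤ Real.log ((n:ℝ)+1) - 1/(2*((n:ℝ)+1)) := by
        have := hs1.2; simp at this ⊢; linarith
      have h2 : (a - (n:ℝ)) * (Real.log (n:ℝ) - 1/(2*(n:ℝ))) ≤ stirl a - stirl (n:ℝ) := hs2.1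
      have hta : a - (n:ℝ) = t := by rw [htdef]
      rw [hta] at h2
      have ht00 : 0 ≤ t := ht0
      have hb1 : t * (stirl ((n:ℝ)+1) - stirl (n:ℝ)) ≤ t * (Real.log ((n:ℝ)+1) - 1/(2*((n:ℝ)+1))) :=
        mul_le_mul_of_nonneg_left h1 ht00
      have hfin : t * (Real.log ((n:ℝ)+1) - 1/(2*((n:ℝ)+1))) - t * (Real.log (n:ℝ) - 1/(2*(n:ℝ)))
          ≤ 3/(2*(n:ℝ)) := by
        have hd : t * (Real.log ((n:ℝ)+1) - 1/(2*((n:ℝ)+1))) - t * (Real.log (n:ℝ) - 1/(2*(n:ℝ)))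
            = t * ((Real.log ((n:ℝ)+1) - Real.log (n:ℝ)) + (1/(2*(n:ℝ)) - 1/(2*((n:ℝ)+1)))) := by
          ring
        rw [hd]
        have hterm : (Real.log ((n:ℝ)+1) - Real.log (n:ℝ)) + (1/(2*(n:ℝ)) - 1/(2*((n:ℝ)+1)))
            ≤ 3/(2*(n:ℝ)) := by
          have hx : 1/(2*((n:ℝ)+1)) ≥ 0 := by positivity
          have hy : (1:ℝ)/(n:ℝ) + 1/(2*(n:ℝ)) ≤ 3/(2*(n:ℝ)) := by
            rw [div_add_div _ _ (by positivity) (by positivity), div_le_div_iff₀ (by positivity) (by positivity)]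
            ring_nf; nlinarith
          linarith
        calc t * _ ≤ 1 * ((Real.log ((n:ℝ)+1) - Real.log (n:ℝ)) + (1/(2*(n:ℝ)) - 1/(2*((n:ℝ)+1)))) := by
              apply mul_le_mul_of_nonneg_right (by linarith)
              have hx : 1/(2*((n:ℝ)+1)) ≤ 1/(2*(n:ℝ)) := by
                rw [div_le_div_iff₀ (by positivity) (by positivity)]; linarith
              linarith
          _ ≤ 3/(2*(n:ℝ)) := by rw [one_mul]; exact hterm
      linarith
  -- lower gap
  have hgap2 : stirl ((n:ℝ)+1) - (1-t) * Real.log a - stirl a ≥ -(1/(2*a)) := by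
    have hs3 := stirl_slope (b := a) (c := (n:ℝ)+1) ha0 (by linarith)
    have hu : (n:ℝ) + 1 - a = 1 - t := by rw [htdef]; ring
    have h1 := hs3.1
    rw [hu] at h1
    have hexp : (1 - t) * (Real.log a - 1/(2*a)) = (1-t) * Real.log a - (1-t)/(2*a) := by ring
    rw [hexp] at h1
    have h2 : (1-t)/(2*a) ≤ 1/(2*a) := by
      apply div_le_div_of_nonneg_right ?_ (by linarith)
      · linarith
    linarith
  -- assemble
  have hA : Real.log (Real.Gamma (n:ℝ)) ≤ stirl (n:ℝ) + 1/((n:ℝ)-2) := by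
    have := (abs_le.mp hint1).2; linarith
  have hB : Real.log (Real.Gamma ((n:ℝ)+1)) ≤ stirl ((n:ℝ)+1) + 1/((n:ℝ)-1) := by
    have := (abs_le.mp hint2).2; linarith
  have hB' : stirl ((n:ℝ)+1) - 1/((n:ℝ)-1) ≤ Real.log (Real.Gamma ((n:ℝ)+1)) := by
    have := (abs_le.mp hint2).1; linarith
  have h3 : 1/((n:ℝ)-1) ≤ 1/((n:ℝ)-2) := by
    rw [div_le_div_iff₀ (by linarith) (by linarith)]; linarith
  have hup2 : Real.log (Real.Gamma a) ≤ (1-t) * stirl (n:ℝ) + t * stirl ((n:ℝ)+1)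
      + 1/((n:ℝ)-2) := by
    have h1 := mul_le_mul_of_nonneg_left hA (by linarith : (0:ℝ) ≤ 1 - t)
    have h2 := mul_le_mul_of_nonneg_left hB ht0
    have h4 := mul_le_mul_of_nonneg_left h3 ht0
    rw [mul_add] at h1 h2
    have h5 : (1-t)*(1/((n:ℝ)-2)) + t*(1/((n:ℝ)-2)) = 1/((n:ℝ)-2) := by ring
    linarith [hup]
  have e1 : 1/((n:ℝ)-2) ≤ 8/(7*(n:ℝ)) := by
    rw [div_le_div_iff₀ (by linarith) (by positivity)]; linarith
  have e2 : 3/(2*(n:ℝ)) + 8/(7*(n:ℝ)) ≤ 6/((n:ℝ)+1) := by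
    rw [div_add_div _ _ (by positivity) (by positivity),
      div_le_div_iff₀ (by positivity) (by positivity)]
    nlinarith
  have e3 : (6:ℝ)/((n:ℝ)+1) ≤ 6/a := by
    rw [div_le_div_iff₀ (by positivity) ha0]; nlinarith
  have e4 : 1/((n:ℝ)-1) ≤ 8/(7*a) := by
    rw [div_le_div_iff₀ (by linarith) (by positivity)]; nlinarith
  rw [abs_le]
  constructor
  · -- lower
    have l1 : Real.log (Real.Gamma a) - stirl a ≥ -(1/(2*a)) - 1/((n:ℝ)-1) := by
      linarith [hlow, hB', hgap2]
    have l2 : (1:ℝ)/(2*a) + 8/(7*a) ≤ 6/a := by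
      rw [div_add_div _ _ (by positivity) (by positivity),
        div_le_div_iff₀ (by positivity) (by positivity)]
      nlinarith
    linarith
  · linarith [hup2, hgap, e1, e2, e3]

lemma exp_stirl {a : ℝ} (ha0 : 0 < a) :
    Real.exp (stirl a) = a ^ (a-1) * Real.exp (-a) * Real.sqrt (2*Real.pi*a) := by
  unfold stirl
  rw [Real.exp_add, Real.exp_sub, Real.exp_log (Real.sqrt_pos.mpr (by positivity))]
  have h1 : Real.exp ((a - 1/2) * Real.log a) = a ^ (a - 1/2) := by
    rw [Real.rpow_def_of_pos ha0]; ring_nf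
  have h2 : a ^ (a - 1/2) = a ^ (a-1) * a ^ ((1:ℝ)/2) := by
    rw [← Real.rpow_add ha0]; congr 1; ring
  have h3 : a ^ ((1:ℝ)/2) = Real.sqrt a := (Real.sqrt_eq_rpow a).symm
  have h4 : Real.sqrt (2*Real.pi*a) = Real.sqrt (2*Real.pi) * Real.sqrt a := by
    rw [← Real.sqrt_mul (by positivity)]
  rw [h1, h2, h3, h4, Real.exp_neg]
  ring

lemma gamma_ratio {a : ℝ} (ha : 16 ≤ a) :
    ∃ R : ℝ, Real.Gamma a * R = a ^ (a-1) * Real.exp (-a) * Real.sqrt (2*Real.pi*a)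
      ∧ |R - 1| ≤ 12/a ∧ R ≤ 2 ∧ 0 < R := by
  have ha0 : (0:ℝ) < a := by linarith
  refine ⟨Real.exp (stirl a - Real.log (Real.Gamma a)), ?_, ?_, ?_, Real.exp_pos _⟩
  · rw [← Real.exp_log (Real.Gamma_pos_of_pos ha0), ← Real.exp_add]
    rw [Real.exp_log (Real.Gamma_pos_of_pos ha0)]
    have : Real.log (Real.Gamma a) + (stirl a - Real.log (Real.Gamma a)) = stirl a := by ring
    rw [this, exp_stirl ha0]
  · have hmu := gamma_real_stirling ha
    have habs : |stirl a - Real.log (Real.Gamma a)| ≤ 6/a := by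
      rw [abs_sub_comm]; exact hmu
    have hle1 : |stirl a - Real.log (Real.Gamma a)| ≤ 1 := by
      refine habs.trans ?_
      rw [div_le_one ha0]; linarith
    have := Real.abs_exp_sub_one_le hle1
    refine this.trans ?_
    have : 2 * |stirl a - Real.log (Real.Gamma a)| ≤ 2 * (6/a) := by linarith
    refine this.trans (le_of_eq ?_)
    ring
  · have hmu := gamma_real_stirling ha
    have habs : |stirl a - Real.log (Real.Gamma a)| ≤ 6/a := by
      rw [abs_sub_comm]; exact hmu
    have hle1 : |stirl a - Real.log (Real.Gamma a)| ≤ 1 := by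
      refine habs.trans ?_
      rw [div_le_one ha0]; linarith
    have h2 := Real.abs_exp_sub_one_le hle1
    have h3 : |Real.exp (stirl a - Real.log (Real.Gamma a)) - 1| ≤ 2 := by
      refine h2.trans ?_; linarith [hle1]
    have h4 : |Real.exp (stirl a - Real.log (Real.Gamma a)) - 1| ≤ 2*(6/a) := by
      refine h2.trans ?_; linarith
    have h5 : 2*(6/a) ≤ 1 := by rw [show (2:ℝ)*(6/a) = 12/a by ring, div_le_one ha0]; linarith
    have := (abs_le.mp h4).2
    linarith

lemma integrable_pow_exp {a : ℝ} (ha0 : 0 < a) {r : ℝ} (hr : 0 < r) :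
    IntegrableOn (fun t : ℝ => t ^ (a-1) * Real.exp (-(r*t))) (Ioi 0) := by
  have hg := Real.GammaIntegral_convergent ha0
  have h1 : IntegrableOn (fun t : ℝ => Real.exp (-(r*t)) * (r*t) ^ (a-1)) (Ioi 0) := by
    have := (integrableOn_Ioi_comp_mul_left_iff
      (fun u : ℝ => Real.exp (-u) * u ^ (a-1)) 0 hr).mpr (by simpa using hg)
    simpa using this
  have h2 : IntegrableOn (fun t : ℝ => r ^ ((1:ℝ)-a) * (Real.exp (-(r*t)) * (r*t) ^ (a-1)))
      (Ioi 0) := h1.const_mul _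
  refine h2.congr_fun ?_ measurableSet_Ioi
  intro t ht
  have ht0 : (0:ℝ) < t := ht
  have hrr : r ^ ((1:ℝ)-a) * r ^ (a-1) = 1 := by
    rw [← Real.rpow_add hr]; norm_num
  simp only
  rw [Real.mul_rpow hr.le ht0.le]
  calc r ^ ((1:ℝ)-a) * (Real.exp (-(r*t)) * (r ^ (a-1) * t ^ (a-1)))
      = (r ^ ((1:ℝ)-a) * r ^ (a-1)) * (t ^ (a-1) * Real.exp (-(r*t))) := by ring
    _ = t ^ (a-1) * Real.exp (-(r*t)) := by rw [hrr]; ring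

lemma chernoff {a x : ℝ} (hx : 0 < x) (hxa : x < a) :
    ∫ t in Ioc (0:ℝ) x, t ^ (a-1) * Real.exp (-t)
      ≤ Real.Gamma a * ((x/a) ^ a * Real.exp (a - x)) := by
  have ha0 : (0:ℝ) < a := hx.trans hxa
  set r : ℝ := a / x with hr
  have hr1 : 1 < r := (one_lt_div hx).mpr hxa
  have hr0 : 0 < r := by linarith
  have hIoc : IntegrableOn (fun t : ℝ => t ^ (a-1) * Real.exp (-t)) (Ioc 0 x) := by
    refine ((Real.GammaIntegral_convergent ha0).mono_set Ioc_subset_Ioi_self).congr_fun ?_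
      measurableSet_Ioc
    intro t ht; exact mul_comm _ _
  have hInt2 : IntegrableOn (fun t : ℝ => Real.exp (a-x) * (t ^ (a-1) * Real.exp (-(r*t)))) (Ioi 0) :=
    (integrable_pow_exp ha0 hr0).const_mul _
  have step1 : ∫ t in Ioc (0:ℝ) x, t ^ (a-1) * Real.exp (-t)
      ≤ ∫ t in Ioc (0:ℝ) x, Real.exp (a-x) * (t ^ (a-1) * Real.exp (-(r*t))) := by
    refine setIntegral_mono_on hIoc (hInt2.mono_set Ioc_subset_Ioi_self) measurableSet_Ioc ?_
    intro t ht
    have ht0 : 0 < t := ht.1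
    have htx : t ≤ x := ht.2
    have hexp : Real.exp (-t) ≤ Real.exp (a-x) * Real.exp (-(r*t)) := by
      rw [← Real.exp_add, Real.exp_le_exp]
      have h1 : (r - 1) * t ≤ (r - 1) * x :=
        mul_le_mul_of_nonneg_left htx (by linarith)
      have h2 : (r - 1) * x = a - x := by rw [hr]; field_simp
      nlinarith
    calc t ^ (a-1) * Real.exp (-t) ≤ t ^ (a-1) * (Real.exp (a-x) * Real.exp (-(r*t))) :=
          mul_le_mul_of_nonneg_left hexp (Real.rpow_nonneg ht0.le _)
      _ = Real.exp (a-x) * (t ^ (a-1) * Real.exp (-(r*t))) := by ring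
  have step2 : ∫ t in Ioc (0:ℝ) x, Real.exp (a-x) * (t ^ (a-1) * Real.exp (-(r*t)))
      ≤ ∫ t in Ioi (0:ℝ), Real.exp (a-x) * (t ^ (a-1) * Real.exp (-(r*t))) := by
    refine setIntegral_mono_set hInt2 ?_ (HasSubset.Subset.eventuallyLE Ioc_subset_Ioi_self)
    filter_upwards [self_mem_ae_restrict (measurableSet_Ioi : MeasurableSet (Ioi (0:ℝ)))]
    intro t ht
    have : (0:ℝ) < t := ht
    positivity
  have step3 : ∫ t in Ioi (0:ℝ), Real.exp (a-x) * (t ^ (a-1) * Real.exp (-(r*t)))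
      = Real.Gamma a * ((x/a) ^ a * Real.exp (a - x)) := by
    rw [integral_const_mul, Real.integral_rpow_mul_exp_neg_mul_Ioi ha0 hr0]
    have : (1/r) = x/a := by rw [hr]; field_simp
    rw [this]
    ring
  linarith

lemma ibp_deriv {a x : ℝ} (hx : 0 < x) (hxa : x < a) (ha2 : 2 ≤ a) {t : ℝ}
    (ht : t ∈ Icc (0:ℝ) x) :
    HasDerivAt (fun t => t ^ a * Real.exp (-t) / (a - t))
      (t ^ (a-1) * Real.exp (-t) + t ^ a * Real.exp (-t) / (a-t)^2) t := by
  have hta : t < a := lt_of_le_of_lt ht.2 hxa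
  have hat : (0:ℝ) < a - t := by linarith
  have h1 : HasDerivAt (fun t : ℝ => t ^ a) (a * t ^ (a-1)) t :=
    Real.hasDerivAt_rpow_const (Or.inr (by linarith : 1 ≤ a))
  have h2 : HasDerivAt (fun t : ℝ => Real.exp (-t)) (Real.exp (-t) * (-1)) t :=
    ((hasDerivAt_id t).neg).exp
  have h3 := h1.mul h2
  have h4 : HasDerivAt (fun t : ℝ => a - t) (-1) t := (hasDerivAt_id t).const_sub a
  have h5 := h3.div h4 (ne_of_gt hat)
  refine h5.congr_deriv ?_
  simp only [Pi.mul_apply]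
  rcases eq_or_lt_of_le ht.1 with h0 | h0
  · subst h0
    rw [Real.zero_rpow (by linarith : a ≠ 0), Real.zero_rpow (by linarith : a - 1 ≠ 0)]
    simp
  · have hkey : t ^ a = t ^ (a-1) * t := by
      rw [show a = (a-1)+1 by ring, Real.rpow_add_one (ne_of_gt h0)]
      ring_nf
    rw [hkey]
    field_simp [hat.ne']
    ring
  
lemma ibp_cont {a x : ℝ} (hx : 0 < x) (hxa : x < a) (ha2 : 2 ≤ a) :
    ContinuousOn (fun t : ℝ => t ^ (a-1) * Real.exp (-t) + t ^ a * Real.exp (-t) / (a-t)^2)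
      (Icc (0:ℝ) x) ∧
    ContinuousOn (fun t : ℝ => t ^ (a-1) * Real.exp (-t)) (Icc (0:ℝ) x) ∧
    ContinuousOn (fun t : ℝ => t ^ a * Real.exp (-t) / (a-t)^2) (Icc (0:ℝ) x) := by
  have c1 : Continuous fun t : ℝ => t ^ (a-1) := Real.continuous_rpow_const (by linarith)
  have c2 : Continuous fun t : ℝ => t ^ a := Real.continuous_rpow_const (by linarith)
  have c3 : Continuous fun t : ℝ => Real.exp (-t) := Real.continuous_exp.comp continuous_neg
  have c4 : ContinuousOn (fun t : ℝ => t ^ a * Real.exp (-t) / (a-t)^2) (Icc 0 x) := by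
    refine ((c2.mul c3).continuousOn).div ?_ ?_
    · exact ((continuous_const.sub continuous_id).pow 2).continuousOn
    · intro t ht
      have h5 : t < a := lt_of_le_of_lt ht.2 hxa
      exact pow_ne_zero 2 (ne_of_gt (by linarith : (0:ℝ) < a - t))
  exact ⟨((c1.mul c3).continuousOn).add c4, (c1.mul c3).continuousOn, c4⟩

lemma ibp {a x : ℝ} (hx : 0 < x) (hxa : x < a) (ha2 : 2 ≤ a) :
    ∫ t in Ioc (0:ℝ) x, t ^ (a-1) * Real.exp (-t)
      = x ^ a * Real.exp (-x) / (a - x)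
        - ∫ t in Ioc (0:ℝ) x, t ^ a * Real.exp (-t) / (a-t)^2 := by
  obtain ⟨hc0, hc1, hc2⟩ := ibp_cont hx hxa ha2
  have huIcc : uIcc (0:ℝ) x = Icc 0 x := uIcc_of_le hx.le
  have hftc := intervalIntegral.integral_eq_sub_of_hasDerivAt
    (f := fun t => t ^ a * Real.exp (-t) / (a - t))
    (f' := fun t => t ^ (a-1) * Real.exp (-t) + t ^ a * Real.exp (-t) / (a-t)^2)
    (a := 0) (b := x)
    (fun t ht => ibp_deriv hx hxa ha2 (huIcc ▸ ht))
    ((hc0.intervalIntegrable_of_Icc hx.le))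
  have hzero : (0:ℝ) ^ a * Real.exp (-(0:ℝ)) / (a - 0) = 0 := by
    rw [Real.zero_rpow (by linarith : a ≠ 0)]; simp
  rw [hzero, sub_zero] at hftc
  have hsplit : ∫ t in (0:ℝ)..x, (t ^ (a-1) * Real.exp (-t) + t ^ a * Real.exp (-t) / (a-t)^2)
      = (∫ t in (0:ℝ)..x, t ^ (a-1) * Real.exp (-t))
        + ∫ t in (0:ℝ)..x, t ^ a * Real.exp (-t) / (a-t)^2 :=
    intervalIntegral.integral_add (hc1.intervalIntegrable_of_Icc hx.le)
      (hc2.intervalIntegrable_of_Icc hx.le)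
  rw [hsplit] at hftc
  have e1 : ∫ t in (0:ℝ)..x, t ^ (a-1) * Real.exp (-t)
      = ∫ t in Ioc (0:ℝ) x, t ^ (a-1) * Real.exp (-t) := intervalIntegral.integral_of_le hx.le
  have e2 : ∫ t in (0:ℝ)..x, t ^ a * Real.exp (-t) / (a-t)^2
      = ∫ t in Ioc (0:ℝ) x, t ^ a * Real.exp (-t) / (a-t)^2 := intervalIntegral.integral_of_le hx.le
  rw [e1, e2] at hftc
  linarith

lemma exp_integral_bound {x β : ℝ} (hx : 0 < x) (hβ : 0 < β) :
    ∫ t in Ioc (0:ℝ) x, Real.exp (β*(t-x)) ≤ 1/β := by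
  have hG : ∀ t : ℝ, HasDerivAt (fun t => Real.exp (β*(t-x))/β) (Real.exp (β*(t-x))) t := by
    intro t
    have h := (((hasDerivAt_id t).sub_const x).const_mul β).exp
    have h2 := h.div_const β
    refine h2.congr_deriv ?_
    field_simp
    rfl
  have hcont : Continuous fun t : ℝ => Real.exp (β*(t-x)) := by continuity
  have hftc := intervalIntegral.integral_eq_sub_of_hasDerivAt
    (f := fun t => Real.exp (β*(t-x))/β) (f' := fun t => Real.exp (β*(t-x)))
    (a := 0) (b := x) (fun t _ => hG t)
    (hcont.intervalIntegrable 0 x)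
  rw [intervalIntegral.integral_of_le hx.le] at hftc
  rw [hftc]
  have h1 : Real.exp (β*(x-x)) = 1 := by norm_num
  have h2 : 0 < Real.exp (β*(0-x)) := Real.exp_pos _
  have h3 : 0 < Real.exp (β*(0-x))/β := div_pos h2 hβ
  rw [h1]
  linarith

lemma Jbound {a x : ℝ} (hx : 0 < x) (hxa : x < a) (ha2 : 2 ≤ a) :
    ∫ t in Ioc (0:ℝ) x, t ^ a * Real.exp (-t) / (a-t)^2
      ≤ x ^ a * Real.exp (-x) * x / (a-x)^3 := by
  set β : ℝ := (a-x)/x with hβdef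
  have hβ : 0 < β := by apply _root_.div_pos <;> linarith
  have hax : (0:ℝ) < a - x := by linarith
  have hpt : ∀ t ∈ Ioc (0:ℝ) x, t ^ a * Real.exp (-t) / (a-t)^2
      ≤ x ^ a * Real.exp (-x) / (a-x)^2 * Real.exp (β*(t-x)) := by
    intro t ht
    obtain ⟨ht0, htx⟩ := ht
    have hta : t < a := lt_of_le_of_lt htx hxa
    have hlog : Real.log t - Real.log x ≤ t/x - 1 := by
      have := Real.log_le_sub_one_of_pos (x := t/x) (by positivity)
      rwa [Real.log_div (ne_of_gt ht0) (ne_of_gt hx)] at this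
    have key : Real.log t * a + (-t) ≤ Real.log x * a + (-x) + β*(t-x) := by
      have h1 : a * (Real.log t - Real.log x) ≤ a * (t/x - 1) :=
        mul_le_mul_of_nonneg_left hlog (by linarith)
      have e : a * (t/x - 1) - ((a-x)/x)*(t-x) = t - x := by field_simp; ring
      rw [hβdef]
      nlinarith
    have hnum : t ^ a * Real.exp (-t) ≤ x ^ a * Real.exp (-x) * Real.exp (β*(t-x)) := by
      rw [Real.rpow_def_of_pos ht0, Real.rpow_def_of_pos hx, ← Real.exp_add, ← Real.exp_add,
        ← Real.exp_add]
      rw [Real.exp_le_exp]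
      linarith
    calc t ^ a * Real.exp (-t) / (a-t)^2 ≤ t ^ a * Real.exp (-t) / (a-x)^2 := by
          gcongr
      _ ≤ x ^ a * Real.exp (-x) * Real.exp (β*(t-x)) / (a-x)^2 := by gcongr
      _ = x ^ a * Real.exp (-x) / (a-x)^2 * Real.exp (β*(t-x)) := by ring
  have hintL : IntegrableOn (fun t : ℝ => t ^ a * Real.exp (-t) / (a-t)^2) (Ioc 0 x) :=
    ((ibp_cont hx hxa ha2).2.2.integrableOn_compact isCompact_Icc).mono_set Ioc_subset_Icc_self
  have hintR : IntegrableOn (fun t : ℝ => x ^ a * Real.exp (-x) / (a-x)^2 * Real.exp (β*(t-x)))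
      (Ioc 0 x) := by
    apply Continuous.integrableOn_Ioc
    continuity
  have hmono := setIntegral_mono_on hintL hintR measurableSet_Ioc hpt
  have hconst : ∫ t in Ioc (0:ℝ) x, x ^ a * Real.exp (-x) / (a-x)^2 * Real.exp (β*(t-x))
      = x ^ a * Real.exp (-x) / (a-x)^2 * ∫ t in Ioc (0:ℝ) x, Real.exp (β*(t-x)) :=
    integral_const_mul _ _
  have hfin : x ^ a * Real.exp (-x) / (a-x)^2 * ∫ t in Ioc (0:ℝ) x, Real.exp (β*(t-x))
      ≤ x ^ a * Real.exp (-x) / (a-x)^2 * (1/β) := by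
    apply mul_le_mul_of_nonneg_left (exp_integral_bound hx hβ)
    positivity
  have heq : x ^ a * Real.exp (-x) / (a-x)^2 * (1/β) = x ^ a * Real.exp (-x) * x / (a-x)^3 := by
    rw [hβdef]
    field_simp
  linarith

lemma T_eq {a x : ℝ} (hx : 0 < x) (hxa : x < a) :
    ((x / a) * Real.exp (1 - x / a)) ^ a = (x/a) ^ a * Real.exp (a - x) := by
  have ha0 : (0:ℝ) < a := hx.trans hxa
  rw [Real.mul_rpow (by positivity) (Real.exp_pos _).le]
  congr 1
  rw [← Real.exp_mul]
  congr 1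
  field_simp

set_option maxHeartbeats 2000000 in
theorem lower_incomplete_gamma_asymp' :
    ∃ C : ℝ, ∀ a x : ℝ, 0 < x → x < a →
      |(1 / Real.Gamma a) * (∫ t in Ioc (0:ℝ) x, t ^ (a - 1) * Real.exp (-t)) -
          ((x / a) * Real.exp (1 - x / a)) ^ a / (Real.sqrt (2 * Real.pi * a) * (1 - x / a))| ≤
        C * ((x / a) * Real.exp (1 - x / a)) ^ a /
          (Real.sqrt (2 * Real.pi * a) * (1 - x / a) ^ 3 * a) := by
  refine ⟨250, fun a x hx hxa => ?_⟩
  have ha0 : (0:ℝ) < a := hx.trans hxa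
  have hlam : x / a < 1 := (div_lt_one ha0).mpr hxa
  have hlam0 : 0 < x / a := div_pos hx ha0
  set L : ℝ := 1 - x/a with hLdef
  have hL0 : 0 < L := by simp [hLdef]; linarith
  have hL1 : L < 1 := by simp [hLdef]; linarith
  set S : ℝ := Real.sqrt (2 * Real.pi * a) with hSdef
  have hS0 : 0 < S := Real.sqrt_pos.mpr (by positivity)
  set T : ℝ := ((x / a) * Real.exp (1 - x / a)) ^ a with hTdef
  have hT0 : 0 < T := Real.rpow_pos_of_pos (by positivity) a
  have hTeq : T = (x/a) ^ a * Real.exp (a - x) := T_eq hx hxa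
  have hΓ : 0 < Real.Gamma a := Real.Gamma_pos_of_pos ha0
  have hInt : IntegrableOn (fun t : ℝ => t ^ (a-1) * Real.exp (-t)) (Ioc 0 x) := by
    refine ((Real.GammaIntegral_convergent ha0).mono_set Ioc_subset_Ioi_self).congr_fun ?_
      measurableSet_Ioc
    intro t ht; exact mul_comm _ _
  have hP0 : 0 ≤ ∫ t in Ioc (0:ℝ) x, t ^ (a-1) * Real.exp (-t) := by
    refine setIntegral_nonneg measurableSet_Ioc fun t ht => ?_
    have ht0 : 0 < t := ht.1
    positivity
  have hcher : ∫ t in Ioc (0:ℝ) x, t ^ (a-1) * Real.exp (-t) ≤ Real.Gamma a * T := by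
    rw [hTeq]; exact chernoff hx hxa
  by_cases hreg : L^2 * a ≤ 16
  · -- small (1-λ)²a : crude bound
    have hPle : (1 / Real.Gamma a) * (∫ t in Ioc (0:ℝ) x, t ^ (a-1) * Real.exp (-t)) ≤ T := by
      rw [one_div, inv_mul_le_iff₀ hΓ]
      linarith [hcher]
    have hPge : 0 ≤ (1 / Real.Gamma a) * (∫ t in Ioc (0:ℝ) x, t ^ (a-1) * Real.exp (-t)) := by
      positivity
    have hM0 : 0 < T / (S * L) := by positivity
    have habs : |(1 / Real.Gamma a) * (∫ t in Ioc (0:ℝ) x, t ^ (a-1) * Real.exp (-t)) - T / (S * L)|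
        ≤ T + T / (S * L) := by
      rw [abs_sub_le_iff]
      constructor <;> linarith
    refine habs.trans ?_
    -- need T + T/(S L) ≤ 250 T/(S L³ a)
    have hsqrt2pi : Real.sqrt (2*Real.pi) ≤ 3 := by
      rw [show (3:ℝ) = Real.sqrt 9 by rw [show (9:ℝ) = 3^2 by norm_num, Real.sqrt_sq]; norm_num]
      apply Real.sqrt_le_sqrt
      nlinarith [Real.pi_le_four]
    have hsaL : Real.sqrt a * L ≤ 4 := by
      have he : Real.sqrt a * L = Real.sqrt (a * L^2) := by
        rw [Real.sqrt_mul ha0.le, Real.sqrt_sq hL0.le]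
      rw [he]
      rw [show (4:ℝ) = Real.sqrt 16 by rw [show (16:ℝ) = 4^2 by norm_num, Real.sqrt_sq]; norm_num]
      apply Real.sqrt_le_sqrt
      nlinarith
    have hSsplit : S = Real.sqrt (2*Real.pi) * Real.sqrt a := by
      rw [hSdef, Real.sqrt_mul (by positivity)]
    have hkey : S * L^3 * a ≤ 192 := by
      have he : S * L^3 * a = Real.sqrt (2*Real.pi) * (Real.sqrt a * L) * (L^2 * a) := by
        rw [hSsplit]; ring
      rw [he]
      have h1 : 0 ≤ Real.sqrt (2*Real.pi) := Real.sqrt_nonneg _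
      have h2 : 0 ≤ Real.sqrt a * L := by positivity
      have h3 : 0 ≤ L^2 * a := by positivity
      calc Real.sqrt (2*Real.pi) * (Real.sqrt a * L) * (L^2 * a) ≤ 3 * 4 * 16 := by
            apply mul_le_mul (mul_le_mul hsqrt2pi hsaL h2 (by norm_num)) hreg h3 (by norm_num)
        _ = 192 := by norm_num
    rw [le_div_iff₀ (by positivity : (0:ℝ) < S * L^3 * a)]
    have he2 : (T + T/(S*L)) * (S * L^3 * a) = T * (S * L^3 * a) + T * (L^2 * a) := by
      field_simp
    rw [he2]
    nlinarith [mul_le_mul_of_nonneg_left hkey hT0.le, mul_le_mul_of_nonneg_left hreg hT0.le]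
  · -- main regime
    push_neg at hreg
    have hL2 : L^2 ≤ 1 := by nlinarith
    have ha16 : (16:ℝ) ≤ a := by nlinarith
    obtain ⟨R, hR, hR1, hR2, hR0⟩ := gamma_ratio ha16
    rw [← hSdef] at hR
    have hibp := ibp hx hxa (by linarith : 2 ≤ a)
    set J : ℝ := ∫ t in Ioc (0:ℝ) x, t ^ a * Real.exp (-t) / (a-t)^2 with hJdef
    have hJ0 : 0 ≤ J := by
      refine setIntegral_nonneg measurableSet_Ioc fun t ht => ?_
      have ht0 : 0 < t := ht.1
      have hta : t < a := lt_of_le_of_lt ht.2 hxa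
      positivity
    have hJle := Jbound hx hxa (by linarith : 2 ≤ a)
    -- identity: x^a exp(-x) = T * a^(a-1) * exp(-a) * a
    have hxaexp : x ^ a * Real.exp (-x) = T * (a ^ (a-1) * Real.exp (-a)) * a := by
      have haa : a ^ (a-1) * a = a ^ a := by
        rw [← Real.rpow_add_one (ne_of_gt ha0)]; congr 1; ring
      have hexp2 : Real.exp (a-x) * Real.exp (-a) = Real.exp (-x) := by
        rw [← Real.exp_add]; congr 1; ring
      have hapow : (0:ℝ) < a ^ a := Real.rpow_pos_of_pos ha0 a
      rw [hTeq, Real.div_rpow hx.le ha0.le]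
      have e : x^a / a^a * Real.exp (a-x) * (a^(a-1) * Real.exp (-a)) * a
          = x^a * (Real.exp (a-x) * Real.exp (-a)) * ((a^(a-1) * a) / a^a) := by ring
      rw [e, hexp2, haa, div_self (ne_of_gt hapow), mul_one]
    have hgamma_id : a ^ (a-1) * Real.exp (-a) = Real.Gamma a * R / S := by
      rw [hR, mul_div_assoc, div_self (ne_of_gt hS0), mul_one]
    have hax : a - x = a * L := by rw [hLdef]; field_simp
    -- B/Γ = T R/(S L)
    have hB : (1 / Real.Gamma a) * (x ^ a * Real.exp (-x) / (a - x)) = T * R / (S * L) := by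
      rw [hxaexp, hgamma_id, hax]
      field_simp
    have hmain : (1 / Real.Gamma a) * (∫ t in Ioc (0:ℝ) x, t ^ (a-1) * Real.exp (-t))
        - T / (S * L) = (T / (S * L)) * (R - 1) - J / Real.Gamma a := by
      rw [hibp]
      rw [mul_sub, hB]
      field_simp
      ring
    rw [hmain]
    have habs : |(T / (S * L)) * (R - 1) - J / Real.Gamma a|
        ≤ (T / (S * L)) * |R - 1| + J / Real.Gamma a := by
      refine (abs_sub _ _).trans ?_
      rw [abs_mul, abs_of_nonneg (by positivity : (0:ℝ) ≤ T / (S*L)),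
        abs_of_nonneg (by positivity : (0:ℝ) ≤ J / Real.Gamma a)]
    refine habs.trans ?_
    -- term 1
    have ht1 : (T / (S * L)) * |R - 1| ≤ 12 * (T / (S * L^3 * a)) := by
      have h1 : (T / (S * L)) * |R - 1| ≤ (T / (S * L)) * (12/a) :=
        mul_le_mul_of_nonneg_left hR1 (by positivity)
      refine h1.trans ?_
      have e : T/(S*L)*(12/a) = (12*T/(S*L^3*a)) * L^2 := by
        field_simp
      rw [e]
      calc (12*T/(S*L^3*a)) * L^2 ≤ (12*T/(S*L^3*a)) * 1 :=
            mul_le_mul_of_nonneg_left (by nlinarith) (by positivity)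
        _ = 12 * (T/(S*L^3*a)) := by ring
    -- term 2
    have ht2 : J / Real.Gamma a ≤ 2 * (T / (S * L^3 * a)) := by
      have h1 : J / Real.Gamma a ≤ (x ^ a * Real.exp (-x) * x / (a-x)^3) / Real.Gamma a :=
        (div_le_div_iff_of_pos_right hΓ).mpr hJle
      refine h1.trans ?_
      have h2 : (x ^ a * Real.exp (-x) * x / (a-x)^3) / Real.Gamma a
          = (T / (S * L^3 * a)) * (R * (x/a)) := by
        rw [hxaexp, hgamma_id, hax]
        field_simp
      rw [h2]
      have h3 : R * (x/a) ≤ 2 := by nlinarith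
      have h4 : (T / (S * L^3 * a)) * (R * (x/a)) ≤ (T / (S * L^3 * a)) * 2 :=
        mul_le_mul_of_nonneg_left h3 (by positivity)
      linarith
    have hpos : (0:ℝ) ≤ T/(S*L^3*a) := by positivity
    have e250 : (250:ℝ) * T / (S * L^3 * a) = 250 * (T/(S*L^3*a)) := by ring
    linarith


end AuxTemme

/-- Uniform Temme-type estimate for the lower regularized incomplete gamma function:
with `λ = x/a`, `P(a,x) = ((λ e^{1-λ})^a/√(2πa)) (1/(1-λ) + O(1/((1-λ)³ a)))`
uniformly for `0 < x < a`. -/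
theorem lower_incomplete_gamma_asymp :
    ∃ C : ℝ, ∀ a x : ℝ, 0 < x → x < a →
      |(1 / Real.Gamma a) * (∫ t in Ioc (0:ℝ) x, t ^ (a - 1) * Real.exp (-t)) -
          ((x / a) * Real.exp (1 - x / a)) ^ a / (Real.sqrt (2 * Real.pi * a) * (1 - x / a))| ≤
        C * ((x / a) * Real.exp (1 - x / a)) ^ a /
          (Real.sqrt (2 * Real.pi * a) * (1 - x / a) ^ 3 * a) := by
  exact lower_incomplete_gamma_asymp'
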